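/- For any diagram D ⊆ [n] × [n], the number of distinct monomials x^C over all diagrams C with C ≤ D is at least rank(D) + 1. -/

import Mathlib

open Finset

def colLE {α : Type*} [LinearOrder α] (R S : Finset α) : Prop :=
  R.card = S.card ∧
  ∀ (k : ℕ) (hR : k < (R.sort (· ≤ ·)).length) (hS : k < (S.sort (· ≤ ·)).length),
    (R.sort (· ≤ ·)).get ⟨k, hR⟩ ≤ (S.sort (· ≤ ·)).get ⟨k, hS⟩

def colRank (S : Finset ℕ) : ℕ :=
  ∑ i ∈ S, ((Finset.Icc 1 i).filter (fun k => k ∉ S)).card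

def diagLE {n : ℕ} (C D : Fin n → Finset ℕ) : Prop := ∀ j, colLE (C j) (D j)

def diagLT {n : ℕ} (C D : Fin n → Finset ℕ) : Prop := diagLE C D ∧ C ≠ D

def diagRank {n : ℕ} (D : Fin n → Finset ℕ) : ℕ := ∑ j, colRank (D j)

def xMon {n : ℕ} (C : Fin n → Finset ℕ) : ℕ → ℕ :=
  fun i => (Finset.univ.filter (fun j => i ∈ C j)).card

/-! Auxiliary lemmas -/

lemma aux_i {S : Finset ℕ} {k : ℕ} (hk : k < (S.sort (· ≤ ·)).length) :
    k < (S.filter (· ≤ (S.sort (· ≤ ·)).get ⟨k, hk⟩)).card := by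
  have hlt : (Finset.range (k+1)).card
      ≤ (S.filter (· ≤ (S.sort (· ≤ ·)).get ⟨k, hk⟩)).card := by
    refine Finset.card_le_card_of_injOn (fun j => (S.sort (· ≤ ·)).getD j 0) ?_ ?_
    · intro j hj
      have hj' : j < (S.sort (· ≤ ·)).length := lt_of_lt_of_le (Finset.mem_range.mp hj) hk
      show (S.sort (· ≤ ·)).getD j 0 ∈ _
      rw [List.getD_eq_get _ 0 ⟨j, hj'⟩]
      refine Finset.mem_filter.mpr ⟨?_, ?_⟩
      · rw [← Finset.mem_sort (· ≤ ·)]; exact List.get_mem _ _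
      · exact (Finset.pairwise_sort S (· ≤ ·)).rel_get_of_le
          (by simpa using Nat.lt_succ_iff.mp (Finset.mem_range.mp hj))
    · intro a ha b hb hab
      simp only [Finset.coe_range, Set.mem_Iio] at ha hb
      have ha' : a < (S.sort (· ≤ ·)).length := lt_of_lt_of_le ha hk
      have hb' : b < (S.sort (· ≤ ·)).length := lt_of_lt_of_le hb hk
      have hab' : (S.sort (· ≤ ·)).getD a 0 = (S.sort (· ≤ ·)).getD b 0 := hab
      rw [List.getD_eq_get _ 0 ⟨a, ha'⟩, List.getD_eq_get _ 0 ⟨b, hb'⟩] at hab'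
      have := (Finset.sort_nodup S (· ≤ ·)).get_inj_iff.mp hab'
      simpa using this
  simp only [Finset.card_range] at hlt
  omega

lemma aux_ii {R : Finset ℕ} {k : ℕ} (hk : k < (R.sort (· ≤ ·)).length) {x : ℕ}
    (h : k < (R.filter (· ≤ x)).card) :
    (R.sort (· ≤ ·)).get ⟨k, hk⟩ ≤ x := by
  by_contra hc
  push_neg at hc
  have hmap : ∀ y ∈ R.filter (· ≤ x),
      List.idxOf y (R.sort (· ≤ ·)) ∈ Finset.range k := by
    intro y hy
    obtain ⟨hyR, hyx⟩ := Finset.mem_filter.mp hy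
    have hym : y ∈ R.sort (· ≤ ·) := (Finset.mem_sort (· ≤ ·)).mpr hyR
    have hlen : List.idxOf y (R.sort (· ≤ ·)) < (R.sort (· ≤ ·)).length :=
      List.idxOf_lt_length_iff.mpr hym
    rw [Finset.mem_range]
    by_contra hge
    push_neg at hge
    have h2 : (R.sort (· ≤ ·)).get ⟨k, hk⟩
        ≤ (R.sort (· ≤ ·)).get ⟨List.idxOf y (R.sort (· ≤ ·)), hlen⟩ :=
      (Finset.pairwise_sort R (· ≤ ·)).rel_get_of_le (by simpa using hge)
    rw [List.idxOf_get] at h2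
    omega
  have hinj : Set.InjOn (fun y => List.idxOf y (R.sort (· ≤ ·))) ↑(R.filter (· ≤ x)) := by
    intro a ha b hb hab
    simp only [Finset.coe_filter, Set.mem_setOf_eq] at ha hb
    exact (List.idxOf_inj ((Finset.mem_sort (· ≤ ·)).mpr ha.1)).mp hab
  have := Finset.card_le_card_of_injOn _ hmap hinj
  simp only [Finset.card_range] at this
  omega

lemma colLE_of_map {R S : Finset ℕ} (g : ℕ → ℕ)
    (hg : ∀ x ∈ S, g x ∈ R) (hle : ∀ x ∈ S, g x ≤ x)
    (hinj : ∀ x ∈ S, ∀ y ∈ S, g x = g y → x = y)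
    (hcard : R.card = S.card) : colLE R S := by
  refine ⟨hcard, ?_⟩
  intro k hR hS
  apply aux_ii
  set s := (S.sort (· ≤ ·)).get ⟨k, hS⟩ with hs
  have h1 : k < (S.filter (· ≤ s)).card := aux_i hS
  have h2 : (S.filter (· ≤ s)).card ≤ (R.filter (· ≤ s)).card := by
    apply Finset.card_le_card_of_injOn g
    · intro x hx
      obtain ⟨hxS, hxs⟩ := Finset.mem_filter.mp hx
      exact Finset.mem_filter.mpr ⟨hg x hxS, le_trans (hle x hxS) hxs⟩
    · intro a ha b hb hab
      simp only [Finset.coe_filter, Set.mem_setOf_eq] at ha hb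
      exact hinj a ha.1 b hb.1 hab
  omega

lemma colLE_refl (S : Finset ℕ) : colLE S S := ⟨rfl, fun _ _ _ => le_refl _⟩

lemma colLE_trans {R S T : Finset ℕ} (h1 : colLE R S) (h2 : colLE S T) : colLE R T := by
  refine ⟨h1.1.trans h2.1, ?_⟩
  intro k hR hT
  have hS : k < (S.sort (· ≤ ·)).length := by
    rw [Finset.length_sort, ← h1.1]
    rwa [Finset.length_sort] at hR
  exact le_trans (h1.2 k hR hS) (h2.2 k hS hT)

/-- weight of a diagram -/
def wt {n : ℕ} (C : Fin n → Finset ℕ) : ℕ := ∑ j, ∑ i ∈ C j, i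

lemma mwt_xMon {n : ℕ} (C : Fin n → Finset ℕ) (hC : ∀ j, C j ⊆ Finset.Icc 1 n) :
    ∑ i ∈ Finset.Icc 1 n, i * xMon C i = wt C := by
  unfold xMon wt
  have : ∀ i ∈ Finset.Icc 1 n, i * (Finset.univ.filter (fun j => i ∈ C j)).card
      = ∑ j : Fin n, if i ∈ C j then i else 0 := by
    intro i _
    rw [Finset.card_filter, Finset.mul_sum]
    exact Finset.sum_congr rfl fun j _ => by split <;> simp
  rw [Finset.sum_congr rfl this, Finset.sum_comm]
  refine Finset.sum_congr rfl fun j _ => ?_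
  rw [← Finset.sum_filter]
  congr 1
  rw [Finset.filter_mem_eq_inter, Finset.inter_eq_right.mpr (hC j)]

lemma colRank_add {S : Finset ℕ} (hS : ∀ i ∈ S, 1 ≤ i) :
    colRank S + ∑ i ∈ Finset.Icc 1 S.card, i = ∑ i ∈ S, i := by
  classical
  set pos : ℕ → ℕ := fun i => (S.filter (· ≤ i)).card with hpos
  have hmono : ∀ a ∈ S, ∀ b ∈ S, a < b → pos a < pos b := by
    intro a ha b hb hab
    apply Finset.card_lt_card
    constructor
    · intro x hx
      obtain ⟨hxS, hxa⟩ := Finset.mem_filter.mp hx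
      exact Finset.mem_filter.mpr ⟨hxS, le_trans hxa hab.le⟩
    · intro hsub
      have hbm : b ∈ S.filter (· ≤ a) := hsub (Finset.mem_filter.mpr ⟨hb, le_refl b⟩)
      have hba : b ≤ a := by simpa using (Finset.mem_filter.mp hbm).2
      omega
  have hinj : ∀ a ∈ S, ∀ b ∈ S, pos a = pos b → a = b := by
    intro a ha b hb hab
    rcases lt_trichotomy a b with h | h | h
    · exact absurd hab (Nat.ne_of_lt (hmono a ha b hb h))
    · exact h
    · exact absurd hab.symm (Nat.ne_of_lt (hmono b hb a ha h))
  -- image of pos is Icc 1 card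
  have himg : S.image pos = Finset.Icc 1 S.card := by
    apply Finset.eq_of_subset_of_card_le
    · intro x hx
      obtain ⟨i, hi, rfl⟩ := Finset.mem_image.mp hx
      refine Finset.mem_Icc.mpr ⟨?_, ?_⟩
      · have : i ∈ S.filter (· ≤ i) := Finset.mem_filter.mpr ⟨hi, le_refl i⟩
        exact Finset.card_pos.mpr ⟨i, this⟩
      · exact Finset.card_le_card (Finset.filter_subset _ _)
    · rw [Nat.card_Icc]
      simp only [Nat.add_sub_cancel]
      rw [Finset.card_image_of_injOn (fun a ha b hb => hinj a ha b hb)]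
  have hsum : ∑ i ∈ S, pos i = ∑ i ∈ Finset.Icc 1 S.card, i := by
    rw [← himg, Finset.sum_image hinj]
  -- per-element identity
  have hper : ∀ i ∈ S, ((Finset.Icc 1 i).filter (fun k => k ∉ S)).card + pos i = i := by
    intro i hi
    have h1 : ((Finset.Icc 1 i).filter (fun k => k ∈ S)).card +
        ((Finset.Icc 1 i).filter (fun k => k ∉ S)).card = (Finset.Icc 1 i).card := by
      exact Finset.card_filter_add_card_filter_not _
    have h2 : (Finset.Icc 1 i).filter (fun k => k ∈ S) = S.filter (· ≤ i) := by
      ext a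
      simp only [Finset.mem_filter, Finset.mem_Icc]
      constructor
      · rintro ⟨⟨_, h⟩, hS'⟩; exact ⟨hS', h⟩
      · rintro ⟨hS', h⟩; exact ⟨⟨hS _ hS', h⟩, hS'⟩
    have h3 : (Finset.Icc 1 i).card = i := by
      rw [Nat.card_Icc]; omega
    rw [h2, h3] at h1
    show _ + (S.filter (· ≤ i)).card = i
    omega
  unfold colRank
  rw [← hsum, ← Finset.sum_add_distrib]
  exact Finset.sum_congr rfl hper

lemma downward_closed_eq {S : Finset ℕ} (h1 : ∀ i ∈ S, 1 ≤ i)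
    (hdc : ∀ i ∈ S, 2 ≤ i → i - 1 ∈ S) : S = Finset.Icc 1 S.card := by
  rcases S.eq_empty_or_nonempty with rfl | hne
  · simp
  · have key : ∀ i, i ∈ S → ∀ a, 1 ≤ a → a ≤ i → a ∈ S := by
      intro i
      induction i using Nat.strong_induction_on with
      | _ i ih =>
        intro hi a ha hai
        rcases eq_or_lt_of_le hai with rfl | hlt
        · exact hi
        · have h2 : 2 ≤ i := by omega
          have := hdc i hi h2
          exact ih (i-1) (by omega) this a ha (by omega)
    set M := S.max' hne with hM
    have hMem : M ∈ S := S.max'_mem hne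
    have hsub1 : Finset.Icc 1 M ⊆ S := by
      intro a ha
      obtain ⟨h1', h2'⟩ := Finset.mem_Icc.mp ha
      exact key M hMem a h1' h2'
    have hsub2 : S ⊆ Finset.Icc 1 M := by
      intro a ha
      exact Finset.mem_Icc.mpr ⟨h1 a ha, S.le_max' a ha⟩
    have hSeq : S = Finset.Icc 1 M := le_antisymm hsub2 hsub1
    have : S.card = M := by rw [hSeq, Nat.card_Icc]; omega
    rw [← this] at hSeq
    exact hSeq

lemma colLE_step {S : Finset ℕ} {i : ℕ} (hi : i ∈ S) (h2 : 2 ≤ i) (hni : i - 1 ∉ S) :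
    colLE (insert (i-1) (S.erase i)) S := by
  apply colLE_of_map (fun x => if x = i then i - 1 else x)
  · intro x hx
    by_cases h : x = i
    · simp [h]
    · simp only [h, if_false]
      exact Finset.mem_insert_of_mem (Finset.mem_erase.mpr ⟨h, hx⟩)
  · intro x hx
    by_cases h : x = i <;> simp [h]
  · intro a ha b hb hab
    have hab' : (if a = i then i - 1 else a) = (if b = i then i - 1 else b) := hab
    by_cases h1' : a = i
    · by_cases h2' : b = i
      · rw [h1', h2']
      · exfalso
        rw [if_pos h1', if_neg h2'] at hab'
        exact hni (by rw [hab']; exact hb)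
    · by_cases h2' : b = i
      · exfalso
        rw [if_neg h1', if_pos h2'] at hab'
        exact hni (by rw [← hab']; exact ha)
      · rwa [if_neg h1', if_neg h2'] at hab' 
  · rw [Finset.card_insert_of_notMem (fun h => hni (Finset.mem_of_mem_erase h)),
      Finset.card_erase_of_mem hi]
    have : 1 ≤ S.card := Finset.card_pos.mpr ⟨i, hi⟩
    omega

lemma chain_lemma {n : ℕ} (D : Fin n → Finset ℕ) (hD : ∀ j, D j ⊆ Finset.Icc 1 n) :
    ∀ t, t ≤ diagRank D → ∃ C : Fin n → Finset ℕ,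
      (∀ j, C j ⊆ Finset.Icc 1 n) ∧ diagLE C D ∧ wt C + t = wt D := by
  classical
  have hrank : diagRank D + ∑ j, ∑ i ∈ Finset.Icc 1 (D j).card, i = wt D := by
    unfold diagRank wt
    rw [← Finset.sum_add_distrib]
    refine Finset.sum_congr rfl fun j _ => ?_
    exact colRank_add (fun i hi => (Finset.mem_Icc.mp (hD j hi)).1)
  intro t
  induction t with
  | zero => exact fun _ => ⟨D, hD, fun j => colLE_refl _, by omega⟩
  | succ t ih =>
    intro ht
    obtain ⟨C, hC, hCD, hw⟩ := ih (by omega)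
    -- find a column not equal to its bottom-justified form
    have hex : ∃ j, C j ≠ Finset.Icc 1 (C j).card := by
      by_contra hall
      push_neg at hall
      have hwc : wt C = ∑ j, ∑ i ∈ Finset.Icc 1 (D j).card, i := by
        unfold wt
        refine Finset.sum_congr rfl fun j _ => ?_
        rw [hall j, (hCD j).1]
      omega
    obtain ⟨j, hj⟩ := hex
    have h1 : ∀ i ∈ C j, 1 ≤ i := fun i hi => (Finset.mem_Icc.mp (hC j hi)).1
    have hgap : ∃ i ∈ C j, 2 ≤ i ∧ i - 1 ∉ C j := by
      by_contra hcontra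
      push_neg at hcontra
      exact hj (downward_closed_eq h1 (fun i hi h2 => hcontra i hi h2))
    obtain ⟨i, hiC, h2i, hni⟩ := hgap
    set S' := insert (i-1) ((C j).erase i) with hS'
    refine ⟨Function.update C j S', ?_, ?_, ?_⟩
    · intro j'
      by_cases h : j' = j
      · subst h
        rw [Function.update_self]
        intro x hx
        rcases Finset.mem_insert.mp hx with rfl | hx'
        · have := hC j' hiC
          rw [Finset.mem_Icc] at this ⊢
          omega
        · exact hC j' (Finset.mem_of_mem_erase hx')
      · rw [Function.update_of_ne h]; exact hC j'
    · intro j'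
      by_cases h : j' = j
      · subst h
        rw [Function.update_self]
        exact colLE_trans (colLE_step hiC h2i hni) (hCD j')
      · rw [Function.update_of_ne h]; exact hCD j'
    · have hins : ∑ x ∈ S', x + 1 = ∑ x ∈ C j, x := by
        rw [hS', Finset.sum_insert (fun h => hni (Finset.mem_of_mem_erase h)),
          ← Finset.add_sum_erase _ _ hiC]
        omega
      have h1' : wt (Function.update C j S')
          = ∑ x ∈ S', x + ∑ j' ∈ Finset.univ.erase j, ∑ x ∈ C j', x := by
        unfold wt
        rw [← Finset.add_sum_erase _ _ (Finset.mem_univ j), Function.update_self]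
        congr 1
        exact Finset.sum_congr rfl fun j' hj' => by
          rw [Function.update_of_ne (Finset.mem_erase.mp hj').1]
      have h2' : wt C = ∑ x ∈ C j, x + ∑ j' ∈ Finset.univ.erase j, ∑ x ∈ C j', x := by
        unfold wt
        rw [← Finset.add_sum_erase _ _ (Finset.mem_univ j)]
      omega

/-- The number of distinct monomials `x^C` over diagrams `C ≤ D` is at least `rank(D) + 1`. -/
theorem stmt_4 (n : ℕ) (D : Fin n → Finset ℕ) (hD : ∀ j, D j ⊆ Finset.Icc 1 n) :
    Set.ncard {m : ℕ → ℕ | ∃ C : Fin n → Finset ℕ,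
        (∀ j, C j ⊆ Finset.Icc 1 n) ∧ diagLE C D ∧ xMon C = m}
      ≥ diagRank D + 1 := by
  classical
  set r := diagRank D with hr
  set Mset := {m : ℕ → ℕ | ∃ C : Fin n → Finset ℕ,
      (∀ j, C j ⊆ Finset.Icc 1 n) ∧ diagLE C D ∧ xMon C = m} with hMset
  -- finiteness of Mset
  have hfin : Mset.Finite := by
    have hsub : Mset ⊆ xMon '' {C : Fin n → Finset ℕ | ∀ j, C j ⊆ Finset.Icc 1 n} := by
      rintro m ⟨C, hC, _, rfl⟩
      exact ⟨C, hC, rfl⟩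
    refine Set.Finite.subset (Set.Finite.image _ ?_) hsub
    have : {C : Fin n → Finset ℕ | ∀ j, C j ⊆ Finset.Icc 1 n}
        = Set.pi Set.univ (fun _ : Fin n => {S : Finset ℕ | S ⊆ Finset.Icc 1 n}) := by
      ext C
      simp [Set.mem_pi]
    rw [this]
    apply Set.Finite.pi
    intro _
    have : {S : Finset ℕ | S ⊆ Finset.Icc 1 n} = ↑(Finset.Icc 1 n).powerset := by
      ext S
      simp only [Finset.coe_powerset, Set.mem_preimage, Set.mem_powerset_iff,
        Finset.coe_subset, Set.mem_setOf_eq]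
    rw [this]
    exact Finset.finite_toSet _
  -- the chain of diagrams
  have hchain := chain_lemma D hD
  choose f hf1 hf2 hf3 using fun t : Fin (r+1) => hchain t (Nat.lt_succ_iff.mp t.2)
  have hmem : ∀ t : Fin (r+1), xMon (f t) ∈ Mset := fun t => ⟨f t, hf1 t, hf2 t, rfl⟩
  have hinj : Function.Injective (fun t : Fin (r+1) => xMon (f t)) := by
    intro a b hab
    have hw : wt (f a) = wt (f b) := by
      rw [← mwt_xMon (f a) (hf1 a), ← mwt_xMon (f b) (hf1 b)]
      simp only at hab
      rw [hab]
    have ha := hf3 a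
    have hb := hf3 b
    have : (a : ℕ) = (b : ℕ) := by omega
    exact Fin.ext this
  have hcard : ((Finset.univ : Finset (Fin (r+1))).image (fun t => xMon (f t))).card
      = r + 1 := by
    rw [Finset.card_image_of_injective _ hinj, Finset.card_univ, Fintype.card_fin]
  have hsub2 : ↑((Finset.univ : Finset (Fin (r+1))).image (fun t => xMon (f t))) ⊆ Mset := by
    intro m hm
    obtain ⟨t, _, rfl⟩ := Finset.mem_image.mp hm
    exact hmem t
  calc r + 1
      = ((Finset.univ : Finset (Fin (r+1))).image (fun t => xMon (f t))).card := hcard.symm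
    _ = (↑((Finset.univ : Finset (Fin (r+1))).image (fun t => xMon (f t))) : Set (ℕ → ℕ)).ncard := by
        rw [Set.ncard_coe_finset]
    _ ≤ Mset.ncard := Set.ncard_le_ncard hsub2 hfin
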